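/- Let G be a connected finite simple graph with n edges, with B(G) ≠ ∅ and Ω(G) ≠ ∅. Then h_D(G) ≥ 1/(2n − 1), and equality holds if and only if G has exactly one pendant vertex. -/

import Mathlib

attribute [local instance] Classical.propDecidable

open Finset

/-- The degree of a vertex `x` in a finite simple graph `G`. -/
noncomputable def deg {V : Type*} [Fintype V] (G : SimpleGraph V) (x : V) : ℕ :=
  (Finset.univ.filter (fun y => G.Adj x y)).card

/-- The `p`-energy `‖df‖_{p,G}^p = Σ_{{x,y} ∈ E(G)} |f x - f y|^p`
(each unordered edge counted once, i.e. half the double sum). -/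
noncomputable def energy {V : Type*} [Fintype V] (G : SimpleGraph V) (p : ℝ) (f : V → ℝ) : ℝ :=
  (∑ x : V, ∑ y : V, if G.Adj x y then |f x - f y| ^ p else 0) / 2

/-- The weighted `p`-norm `‖f‖_{p,G}^p = Σ_x |f x|^p · deg x`. -/
noncomputable def pnorm {V : Type*} [Fintype V] (G : SimpleGraph V) (p : ℝ) (f : V → ℝ) : ℝ :=
  ∑ x : V, |f x| ^ p * (deg G x : ℝ)

/-- The `p`-Rayleigh quotient `R_{p,G}[f]`. -/
noncomputable def rayleigh {V : Type*} [Fintype V] (G : SimpleGraph V) (p : ℝ) (f : V → ℝ) : ℝ :=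
  energy G p f / pnorm G p f

/-- The first `p`-Dirichlet eigenvalue `λ_{1,p}(G)`: the infimum of Rayleigh quotients of
nonzero functions vanishing on the boundary `B(G)` (the set of pendant vertices). -/
noncomputable def lambda1 {V : Type*} [Fintype V] (G : SimpleGraph V) (p : ℝ) : ℝ :=
  sInf { r : ℝ | ∃ f : V → ℝ, (∀ x : V, deg G x = 1 → f x = 0) ∧ f ≠ 0 ∧ r = rayleigh G p f }

/-- The number of edges with exactly one endpoint in `U`. -/
noncomputable def cutCard {V : Type*} [Fintype V] (G : SimpleGraph V) (U : Finset V) : ℕ :=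
  ∑ x ∈ U, (Finset.univ.filter (fun y => G.Adj x y ∧ y ∉ U)).card

/-- The Dirichlet Cheeger constant `h_D(G)`. -/
noncomputable def cheeger {V : Type*} [Fintype V] (G : SimpleGraph V) : ℝ :=
  sInf { r : ℝ | ∃ U : Finset V, U.Nonempty ∧ (∀ x ∈ U, deg G x ≠ 1) ∧
    r = (cutCard G U : ℝ) / ∑ x ∈ U, (deg G x : ℝ) }

/-- The tadpole graph `T_{n,i}` on vertices `0, …, n-1` (vertex `k-1` representing `t_k`):
edges between consecutive vertices together with the edge `t_1 ∼ t_i`. -/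
def tadpole (n i : ℕ) : SimpleGraph (Fin n) :=
  SimpleGraph.fromRel (fun a b => b.val = a.val + 1 ∨ (a.val = 0 ∧ b.val = i - 1))

/-- The path graph on `n` vertices. -/
def pathG (n : ℕ) : SimpleGraph (Fin n) :=
  SimpleGraph.fromRel (fun a b => b.val = a.val + 1)

lemma sum_deg {V : Type*} [Fintype V] (G : SimpleGraph V) :
    ∑ x, deg G x = 2 * G.edgeFinset.card := by
  classical
  have h : ∀ x, deg G x = G.degree x := by
    intro x
    unfold deg SimpleGraph.degree
    congr 1
    ext y
    simp [SimpleGraph.mem_neighborFinset]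
  rw [Finset.sum_congr rfl fun x _ => h x]
  rw [SimpleGraph.sum_degrees_eq_twice_card_edges G]

lemma pendant_unique {V : Type*} [Fintype V] {G : SimpleGraph V} {b a c : V}
    (hb : deg G b = 1) (ha : G.Adj b a) (hc : G.Adj b c) : a = c := by
  have h := Finset.card_le_one.mp (le_of_eq hb)
  exact h a (by simp [ha]) c (by simp [hc])

/-- For a connected finite simple graph `G` with `n` edges, nonempty boundary and nonempty
interior, `h_D(G) ≥ 1/(2n-1)`, with equality iff `G` has exactly one pendant vertex. -/
theorem cheeger_lower_bound {V : Type*} [Fintype V] (G : SimpleGraph V)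
    (hconn : G.Connected) (n : ℕ) (hedges : G.edgeFinset.card = n)
    (hB : ∃ x : V, deg G x = 1) (hΩ : ∃ x : V, deg G x ≠ 1) :
    1 / (2 * (n : ℝ) - 1) ≤ cheeger G ∧
      (cheeger G = 1 / (2 * (n : ℝ) - 1) ↔
        (Finset.univ.filter (fun x : V => deg G x = 1)).card = 1) := by
  classical
  obtain ⟨b, hb⟩ := hB
  obtain ⟨w, hw⟩ := hΩ
  have hbw : b ≠ w := fun h => hw (h ▸ hb)
  have hdegpos : ∀ x : V, 0 < deg G x := by
    intro x
    rcases eq_or_ne x b with rfl | hxb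
    · omega
    · obtain ⟨p⟩ := hconn.preconnected x b
      cases p with
      | nil => exact absurd rfl hxb
      | cons h _ =>
        exact Finset.card_pos.mpr ⟨_, Finset.mem_filter.mpr ⟨Finset.mem_univ _, h⟩⟩
  have hdeg2 : ∀ x : V, deg G x ≠ 1 → 2 ≤ deg G x := fun x hx => by
    have := hdegpos x; omega
  have hsum : ∑ x, deg G x = 2 * n := by rw [sum_deg, hedges]
  set B : Finset V := Finset.univ.filter (fun x => deg G x = 1) with hBdef
  have hBb : b ∈ B := Finset.mem_filter.mpr ⟨Finset.mem_univ _, hb⟩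
  have hsumB : ∑ x ∈ B, deg G x = B.card := by
    rw [Finset.sum_congr rfl (fun x hx => (Finset.mem_filter.mp hx).2)]; simp; rfl
  have hwB : w ∉ B := by simp [hBdef, hw]
  have hBcard : B.card + 2 ≤ 2 * n := by
    have h1 : deg G w + ∑ x ∈ B, deg G x ≤ ∑ x, deg G x := by
      rw [← Finset.sum_insert hwB]
      exact Finset.sum_le_sum_of_subset (Finset.subset_univ _)
    have := hdeg2 w hw
    omega
  have hB1 : 1 ≤ B.card := Finset.card_pos.mpr ⟨b, hBb⟩
  set Om : Finset V := Finset.univ.filter (fun x => deg G x ≠ 1) with hOmdef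
  have hwOm : w ∈ Om := Finset.mem_filter.mpr ⟨Finset.mem_univ _, hw⟩
  set S : Set ℝ := { r : ℝ | ∃ U : Finset V, U.Nonempty ∧ (∀ x ∈ U, deg G x ≠ 1) ∧
    r = (cutCard G U : ℝ) / ∑ x ∈ U, (deg G x : ℝ) } with hSdef
  have hSne : S.Nonempty :=
    ⟨_, ⟨Om, ⟨w, hwOm⟩, fun x hx => (Finset.mem_filter.mp hx).2, rfl⟩⟩
  have hch : cheeger G = sInf S := rfl
  have key : ∀ r ∈ S, 1 / (2 * (n : ℝ) - B.card) ≤ r := by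
    rintro r ⟨U, hUne, hU, rfl⟩
    have hbU : b ∉ U := fun h => hU b h hb
    obtain ⟨u, hu⟩ := hUne
    obtain ⟨p⟩ := hconn.preconnected u b
    obtain ⟨d, _, hd1, hd2⟩ := p.exists_boundary_dart (↑U) (by simpa using hu)
      (by simpa using hbU)
    have hcut : 1 ≤ cutCard G U := by
      calc 1 ≤ (Finset.univ.filter (fun y => G.Adj d.fst y ∧ y ∉ U)).card :=
            Finset.card_pos.mpr ⟨d.snd, Finset.mem_filter.mpr
              ⟨Finset.mem_univ _, d.adj, by simpa using hd2⟩⟩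
        _ ≤ cutCard G U := by
            unfold cutCard
            exact Finset.single_le_sum (f := fun x => (Finset.univ.filter (fun y => G.Adj x y ∧ y ∉ U)).card) (fun _ _ => Nat.zero_le _) (by simpa using hd1)
    have hdisj : Disjoint U B := by
      rw [Finset.disjoint_left]
      intro a haU haB
      exact hU a haU (Finset.mem_filter.mp haB).2
    have hUB : ∑ x ∈ U, deg G x + B.card ≤ 2 * n := by
      have : ∑ x ∈ U ∪ B, deg G x ≤ ∑ x, deg G x :=
        Finset.sum_le_sum_of_subset (Finset.subset_univ _)
      rw [Finset.sum_union hdisj, hsumB] at this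
      omega
    have hdsum2 : 2 ≤ ∑ x ∈ U, deg G x :=
      le_trans (hdeg2 u (hU u hu)) (Finset.single_le_sum (fun _ _ => Nat.zero_le _) hu)
    have hcast : ∑ x ∈ U, ((deg G x : ℝ)) = ((∑ x ∈ U, deg G x : ℕ) : ℝ) := by push_cast; rfl
    have hdpos : (0:ℝ) < ∑ x ∈ U, (deg G x : ℝ) := by
      rw [hcast]; exact_mod_cast Nat.lt_of_lt_of_le (by norm_num) hdsum2
    have hdle : ∑ x ∈ U, (deg G x : ℝ) ≤ 2 * (n:ℝ) - B.card := by
      rw [hcast]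
      have : ((∑ x ∈ U, deg G x : ℕ) : ℝ) + B.card ≤ 2 * n := by exact_mod_cast hUB
      linarith
    have h1c : (1:ℝ) ≤ cutCard G U := by exact_mod_cast hcut
    calc 1 / (2 * (n:ℝ) - B.card) ≤ 1 / ∑ x ∈ U, (deg G x : ℝ) := by
          apply one_div_le_one_div_of_le hdpos hdle
      _ ≤ (cutCard G U : ℝ) / ∑ x ∈ U, (deg G x : ℝ) := by gcongr
  have hBle : (B.card : ℝ) + 2 ≤ 2 * n := by exact_mod_cast hBcard
  have hlow : ∀ r ∈ S, 1 / (2 * (n : ℝ) - 1) ≤ r := by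
    intro r hr
    refine le_trans ?_ (key r hr)
    apply one_div_le_one_div_of_le (by linarith)
    have : (1:ℝ) ≤ B.card := by exact_mod_cast hB1
    linarith
  have hfirst : 1 / (2 * (n : ℝ) - 1) ≤ cheeger G := by
    rw [hch]; exact le_csInf hSne hlow
  refine ⟨hfirst, ?_, ?_⟩
  · intro heq
    by_contra hne
    have hB2 : 2 ≤ B.card := by omega
    have h2 : 1 / (2 * (n : ℝ) - B.card) ≤ cheeger G := by
      rw [hch]; exact le_csInf hSne key
    have hlt : 1 / (2 * (n:ℝ) - 1) < 1 / (2 * (n:ℝ) - B.card) := by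
      apply one_div_lt_one_div_of_lt (by linarith)
      have : (2:ℝ) ≤ B.card := by exact_mod_cast hB2
      linarith
    rw [heq] at h2
    linarith
  · intro hcard1
    obtain ⟨b', hb'⟩ := Finset.card_eq_one.mp hcard1
    have hbb' : b = b' := by
      have := hBb; rw [hb'] at this; simpa using this
    subst hbb'
    have hUnotOm : ∀ y : V, y ∉ Om ↔ y = b := by
      intro y
      simp only [hOmdef, Finset.mem_filter, Finset.mem_univ, true_and, not_not]
      constructor
      · intro h
        have : y ∈ B := Finset.mem_filter.mpr ⟨Finset.mem_univ _, h⟩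
        rw [hb'] at this; simpa using this
      · intro h; rw [h]; exact hb
    -- the neighbor of b
    obtain ⟨z, hz⟩ : ∃ z, G.Adj b z := by
      have := hdegpos b
      obtain ⟨z, hzm⟩ := Finset.card_pos.mp this
      exact ⟨z, (Finset.mem_filter.mp hzm).2⟩
    have hzOm : z ∈ Om := by
      by_contra h
      have := (hUnotOm z).mp h
      exact G.loopless.irrefl b (this ▸ hz)
    -- cut computation
    have hfilt : ∀ x ∈ Om, (Finset.univ.filter (fun y => G.Adj x y ∧ y ∉ Om)).card
        = if G.Adj x b then 1 else 0 := by
      intro x _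
      split_ifs with hadj
      · rw [Finset.card_eq_one]
        refine ⟨b, ?_⟩
        ext y
        simp only [Finset.mem_filter, Finset.mem_univ, true_and, Finset.mem_singleton]
        constructor
        · rintro ⟨h1, h2⟩; exact (hUnotOm y).mp h2
        · rintro rfl; exact ⟨hadj, (hUnotOm _).mpr rfl⟩
      · rw [Finset.card_eq_zero]
        ext y
        simp only [Finset.mem_filter, Finset.mem_univ, true_and, Finset.notMem_empty,
          iff_false, not_and]
        intro h1 h2
        exact hadj (((hUnotOm y).mp h2) ▸ h1)
    have hfiltz : Om.filter (fun x => G.Adj x b) = {z} := by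
      ext x
      simp only [Finset.mem_filter, Finset.mem_singleton]
      constructor
      · rintro ⟨hxOm, hadj⟩
        exact pendant_unique hb hadj.symm hz
      · rintro rfl
        exact ⟨hzOm, hz.symm⟩
    have hcutOm : cutCard G Om = 1 := by
      unfold cutCard
      rw [Finset.sum_congr rfl hfilt, ← Finset.sum_filter, hfiltz]
      simp
    have hdisjOB : Disjoint Om B := by
      rw [Finset.disjoint_left]
      intro a h1 h2
      exact (Finset.mem_filter.mp h1).2 (Finset.mem_filter.mp h2).2
    have hun : Om ∪ B = Finset.univ := by
      ext x
      simp only [hOmdef, hBdef, Finset.mem_union, Finset.mem_filter, Finset.mem_univ, true_and,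
        iff_true]
      exact (em _).symm
    have hsumOm : ∑ x ∈ Om, deg G x = 2 * n - 1 := by
      have h2 : ∑ x ∈ Om, deg G x + ∑ x ∈ B, deg G x = 2 * n := by
        rw [← Finset.sum_union hdisjOB, hun, hsum]
      rw [hsumB, hcard1] at h2
      omega
    have hmem : (1:ℝ) / (2 * (n:ℝ) - 1) ∈ S := by
      refine ⟨Om, ⟨w, hwOm⟩, fun x hx => (Finset.mem_filter.mp hx).2, ?_⟩
      rw [hcutOm]
      have h1 : (1:ℕ) ≤ 2 * n := by omega
      have hcs : ∑ x ∈ Om, (deg G x : ℝ) = 2 * (n:ℝ) - 1 := by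
        calc ∑ x ∈ Om, (deg G x : ℝ) = ((∑ x ∈ Om, deg G x : ℕ) : ℝ) := by push_cast; rfl
          _ = ((2 * n - 1 : ℕ) : ℝ) := by rw [hsumOm]
          _ = 2 * (n:ℝ) - 1 := by push_cast [h1]; ring
      rw [hcs]
      norm_num
    have hle : cheeger G ≤ 1 / (2 * (n:ℝ) - 1) := by
      rw [hch]
      exact csInf_le ⟨_, hlow⟩ hmem
    exact le_antisymm hle hfirst
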